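/- The only 3-connected simple graphs on 6 vertices that are nonplanar are exactly the graphs obtained from K_{3,3} by adding a (possibly empty) set of extra edges; equivalently, every 3-connected nonplanar simple graph on 6 vertices contains K_{3,3} as a spanning subgraph. -/

import Mathlib

open SimpleGraph

/-- `H` is a minor of `G`: disjoint connected branch sets in `G`, one per vertex of `H`,
with an edge of `G` between branch sets of adjacent vertices of `H`. -/
def SimpleGraph.IsMinorOf {V W : Type*} (H : SimpleGraph W) (G : SimpleGraph V) : Prop :=
  ∃ B : W → Set V,
    (∀ w, (G.induce (B w)).Connected) ∧
    (Pairwise fun w₁ w₂ => Disjoint (B w₁) (B w₂)) ∧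
    (∀ w₁ w₂, H.Adj w₁ w₂ → ∃ x ∈ B w₁, ∃ y ∈ B w₂, G.Adj x y)

/-- The wheel `W₆`: hub `0` joined to the 6-cycle `1-2-3-4-5-6-1`. -/
def W6 : SimpleGraph (Fin 7) := SimpleGraph.fromEdgeSet
  {s(0,1), s(0,2), s(0,3), s(0,4), s(0,5), s(0,6),
   s(1,2), s(2,3), s(3,4), s(4,5), s(5,6), s(6,1)}

/-- `V₈`: the 8-cycle (vertices `0,…,7` standing for `1,…,8`) plus the four diagonals. -/
def V8 : SimpleGraph (Fin 8) := SimpleGraph.fromEdgeSet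
  {s(0,1), s(1,2), s(2,3), s(3,4), s(4,5), s(5,6), s(6,7), s(7,0),
   s(0,4), s(1,5), s(2,6), s(3,7)}

/-- `G` is 3-connected: at least 4 vertices and deleting any 2 vertices leaves it connected. -/
def ThreeConnected {V : Type*} (G : SimpleGraph V) : Prop :=
  4 ≤ Nat.card V ∧ ∀ s : Set V, s.ncard ≤ 2 → (G.induce sᶜ).Connected

/-- Nonplanarity, via Wagner's theorem: a `K₅` or `K_{3,3}` minor. -/
def Nonplanar {V : Type*} (G : SimpleGraph V) : Prop :=
  (⊤ : SimpleGraph (Fin 5)).IsMinorOf G ∨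
  (completeBipartiteGraph (Fin 3) (Fin 3)).IsMinorOf G

/-! ### Auxiliary lemmas -/

lemma aux_exists_adj {V : Type*} (G : SimpleGraph V) {s : Set V} (h : (G.induce s).Connected)
    {x y : V} (hx : x ∈ s) (hy : y ∈ s) (hxy : x ≠ y) : ∃ z ∈ s, G.Adj x z := by
  obtain ⟨w⟩ := h.preconnected ⟨x, hx⟩ ⟨y, hy⟩
  cases w with
  | nil => exact absurd rfl hxy
  | @cons _ b _ h p => exact ⟨b.1, b.2, h⟩

lemma three_neighbors {V : Type*} [Fintype V] (hV : Fintype.card V = 6) {G : SimpleGraph V}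
    (h3 : ThreeConnected G) (v : V) :
    ∃ a b c, a ≠ b ∧ a ≠ c ∧ b ≠ c ∧ G.Adj v a ∧ G.Adj v b ∧ G.Adj v c := by
  have key : ∀ s : Set V, s.ncard ≤ 2 → v ∉ s → ∃ z ∉ s, G.Adj v z := by
    intro s hs hvs
    have hconn := h3.2 s hs
    have hsc : 4 ≤ sᶜ.ncard := by
      have h1 : s.ncard + sᶜ.ncard = 6 := by
        rw [← hV, ← Nat.card_eq_fintype_card]
        exact Set.ncard_add_ncard_compl s
      omega
    have : ∃ y ∈ sᶜ, y ≠ v := by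
      by_contra hc
      push_neg at hc
      have hsub : sᶜ ⊆ {v} := fun y hy => hc y hy
      have := Set.ncard_le_ncard hsub (Set.finite_singleton v)
      rw [Set.ncard_singleton] at this
      omega
    obtain ⟨y, hy, hyv⟩ := this
    obtain ⟨z, hz, hadj⟩ := aux_exists_adj G hconn (Set.mem_compl hvs) hy (Ne.symm hyv)
    exact ⟨z, hz, hadj⟩
  obtain ⟨a, ha, hva⟩ := key ∅ (by simp) (by simp)
  obtain ⟨b, hb, hvb⟩ := key {a} (by simp) (by simpa using hva.ne)
  obtain ⟨c, hc, hvc⟩ := key {a, b} ((Set.ncard_insert_le a {b}).trans (by simp))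
    (by simp [hva.ne, hvb.ne])
  simp only [Set.mem_singleton_iff, Set.mem_insert_iff] at hb hc
  push_neg at hc
  exact ⟨a, b, c, fun h => hb h.symm, fun h => hc.1 h.symm, fun h => hc.2 h.symm, hva, hvb, hvc⟩

lemma selA : ∀ i j k : Fin 5, i ≠ j → i ≠ k → j ≠ k →
    ∃ l m : Fin 5, i ≠ l ∧ i ≠ m ∧ j ≠ l ∧ j ≠ m ∧ k ≠ l ∧ k ≠ m ∧ l ≠ m := by decide

lemma selB' {α : Type*} [DecidableEq α] {I Sx Sy : Finset α} (hx : Sx ⊆ I) (hy : Sy ⊆ I)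
    (hI : I.card = 4) (hxc : 2 ≤ Sx.card) (hyc : 2 ≤ Sy.card) (hcov : I ⊆ Sx ∪ Sy) :
    ∃ p q r s, p ∈ Sy ∧ q ∈ Sy ∧ r ∈ Sx ∧ s ∈ Sx ∧
      p ≠ q ∧ p ≠ r ∧ p ≠ s ∧ q ≠ r ∧ q ≠ s ∧ r ≠ s := by
  have hDx : I \ Sx ⊆ Sy := by
    intro a ha
    rw [Finset.mem_sdiff] at ha
    rcases Finset.mem_union.1 (hcov ha.1) with h | h
    · exact absurd h ha.2
    · exact h
  have hDxc : (I \ Sx).card ≤ 2 := by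
    rw [Finset.card_sdiff_of_subset hx, hI]
    omega
  obtain ⟨P, hP1, hP2, hP3⟩ := Finset.exists_subsuperset_card_eq hDx hDxc hyc
  have hQsub : I \ P ⊆ Sx := by
    intro a ha
    rw [Finset.mem_sdiff] at ha
    by_contra hax
    exact ha.2 (hP1 (Finset.mem_sdiff.2 ⟨ha.1, hax⟩))
  have hQc : (I \ P).card = 2 := by
    rw [Finset.card_sdiff_of_subset (hP2.trans hy), hI, hP3]
  obtain ⟨p, q, hpq, hPeq⟩ := Finset.card_eq_two.1 hP3
  obtain ⟨r, s, hrs, hQeq⟩ := Finset.card_eq_two.1 hQc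
  have hpP : p ∈ P := by rw [hPeq]; simp
  have hqP : q ∈ P := by rw [hPeq]; simp
  have hrQ : r ∈ I \ P := by rw [hQeq]; simp
  have hsQ : s ∈ I \ P := by rw [hQeq]; simp
  have hrP : r ∉ P := (Finset.mem_sdiff.1 hrQ).2
  have hsP : s ∉ P := (Finset.mem_sdiff.1 hsQ).2
  exact ⟨p, q, r, s, hP2 hpP, hP2 hqP, hQsub hrQ, hQsub hsQ, hpq,
    fun h => hrP (h ▸ hpP), fun h => hsP (h ▸ hpP),
    fun h => hrP (h ▸ hqP), fun h => hsP (h ▸ hqP), hrs⟩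

lemma mk_equiv {V : Type*} [Fintype V] (hV : Fintype.card V = 6) (G : SimpleGraph V)
    (v0 v1 v2 w0 w1 w2 : V)
    (d01 : v0 ≠ v1) (d02 : v0 ≠ v2) (d12 : v1 ≠ v2)
    (e01 : w0 ≠ w1) (e02 : w0 ≠ w2) (e12 : w1 ≠ w2)
    (c00 : v0 ≠ w0) (c01 : v0 ≠ w1) (c02 : v0 ≠ w2)
    (c10 : v1 ≠ w0) (c11 : v1 ≠ w1) (c12 : v1 ≠ w2)
    (c20 : v2 ≠ w0) (c21 : v2 ≠ w1) (c22 : v2 ≠ w2)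
    (a00 : G.Adj v0 w0) (a01 : G.Adj v0 w1) (a02 : G.Adj v0 w2)
    (a10 : G.Adj v1 w0) (a11 : G.Adj v1 w1) (a12 : G.Adj v1 w2)
    (a20 : G.Adj v2 w0) (a21 : G.Adj v2 w1) (a22 : G.Adj v2 w2) :
    ∃ e : (Fin 3 ⊕ Fin 3) ≃ V,
      ∀ a b, (completeBipartiteGraph (Fin 3) (Fin 3)).Adj a b → G.Adj (e a) (e b) := by
  have hinj : Function.Injective (Sum.elim ![v0, v1, v2] ![w0, w1, w2] : Fin 3 ⊕ Fin 3 → V) := by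
    intro a b hab
    rcases a with ai | ai <;> rcases b with bi | bi <;> fin_cases ai <;> fin_cases bi <;>
      simp_all
  refine ⟨Equiv.ofBijective _ ((Fintype.bijective_iff_injective_and_card _).2
    ⟨hinj, by simp [hV]⟩), ?_⟩
  rintro (ai | ai) (bi | bi) hab
  · simp [completeBipartiteGraph] at hab
  · show G.Adj (Sum.elim ![v0, v1, v2] ![w0, w1, w2] (Sum.inl ai))
      (Sum.elim ![v0, v1, v2] ![w0, w1, w2] (Sum.inr bi))
    fin_cases ai <;> fin_cases bi <;> simp <;>
      first
      | exact a00 | exact a01 | exact a02 | exact a10 | exact a11 | exact a12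
      | exact a20 | exact a21 | exact a22
  · show G.Adj (Sum.elim ![v0, v1, v2] ![w0, w1, w2] (Sum.inr ai))
      (Sum.elim ![v0, v1, v2] ![w0, w1, w2] (Sum.inl bi))
    fin_cases ai <;> fin_cases bi <;> simp <;>
      first
      | exact a00.symm | exact a01.symm | exact a02.symm | exact a10.symm | exact a11.symm
      | exact a12.symm | exact a20.symm | exact a21.symm | exact a22.symm
  · simp [completeBipartiteGraph] at hab

/-- A 3-connected graph on 6 vertices is nonplanar iff it contains `K_{3,3}` as a spanning
subgraph, i.e. iff it is obtained from `K_{3,3}` by adding edges. -/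
theorem stmt11 {V : Type*} [Fintype V] (hV : Fintype.card V = 6) (G : SimpleGraph V)
    (h3 : ThreeConnected G) :
    Nonplanar G ↔ ∃ e : (Fin 3 ⊕ Fin 3) ≃ V,
      ∀ a b, (completeBipartiteGraph (Fin 3) (Fin 3)).Adj a b → G.Adj (e a) (e b) := by
  classical
  constructor
  · rintro (⟨B, hconn, hdisj, hedge⟩ | ⟨B, hconn, hdisj, hedge⟩)
    · -- K5 minor case
      have hne : ∀ i, 1 ≤ (B i).toFinset.card := by
        intro i
        rw [Nat.one_le_iff_ne_zero, ne_eq, Finset.card_eq_zero, ← ne_eq,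
          ← Finset.nonempty_iff_ne_empty]
        exact Set.toFinset_nonempty.2 (Set.nonempty_coe_sort.1 (hconn i).nonempty)
      have hsum : ∑ i, (B i).toFinset.card ≤ 6 := by
        rw [← Finset.card_biUnion (fun a _ b _ hab => Set.disjoint_toFinset.2 (hdisj hab))]
        rw [← hV]
        exact Finset.card_le_univ _
      obtain hallone | hnot := em (∀ i, (B i).toFinset.card = 1)
      · -- Case A : five singleton branch sets, one extra vertex
        have hall : ∀ i, ∃ v, B i = {v} := fun i => by
          rw [← Set.ncard_eq_one, Set.ncard_eq_toFinset_card']; exact hallone i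
        choose f hf using hall
        have finj : Function.Injective f := by
          intro i j hij
          by_contra hne'
          have hd : Disjoint (B i) (B j) := hdisj hne'
          rw [hf i, hf j, hij] at hd
          simp at hd
        have hK : ∀ p q : Fin 5, p ≠ q → G.Adj (f p) (f q) := by
          intro p q hpq
          obtain ⟨z, hz, w, hw, hzw⟩ := hedge p q (by simpa using hpq)
          rw [hf p, Set.mem_singleton_iff] at hz
          rw [hf q, Set.mem_singleton_iff] at hw
          subst hz hw
          exact hzw
        obtain ⟨u, hu⟩ : ∃ u : V, ∀ i, u ≠ f i := by
          by_contra hc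
          push_neg at hc
          have hsurj : Function.Surjective f := fun v => by
            obtain ⟨i, hi⟩ := hc v; exact ⟨i, hi.symm⟩
          have := Fintype.card_le_of_surjective f hsurj
          rw [hV] at this
          simp at this
        have hcov : ∀ v : V, v = u ∨ ∃ i, v = f i := by
          have hnm : u ∉ Finset.image f Finset.univ := by
            simp only [Finset.mem_image]
            rintro ⟨i, -, hi⟩
            exact hu i hi.symm
          have hcard : (insert u (Finset.image f Finset.univ)).card = 6 := by
            rw [Finset.card_insert_of_notMem hnm, Finset.card_image_of_injective _ finj]
            simp
          have huniv := Finset.eq_univ_of_card _ (by rw [hcard, hV])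
          intro v
          have hv : v ∈ insert u (Finset.image f Finset.univ) := huniv ▸ Finset.mem_univ v
          rcases Finset.mem_insert.1 hv with h | h
          · exact Or.inl h
          · obtain ⟨i, -, hi⟩ := Finset.mem_image.1 h
            exact Or.inr ⟨i, hi.symm⟩
        obtain ⟨a, b, c, hab, hac, hbc, hua, hub, huc⟩ := three_neighbors hV h3 u
        obtain ⟨ia, hia⟩ : ∃ i, a = f i := (hcov a).resolve_left (fun h => hua.ne h.symm)
        obtain ⟨ib, hib⟩ : ∃ i, b = f i := (hcov b).resolve_left (fun h => hub.ne h.symm)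
        obtain ⟨ic, hic⟩ : ∃ i, c = f i := (hcov c).resolve_left (fun h => huc.ne h.symm)
        subst hia hib hic
        have hiab : ia ≠ ib := fun h => hab (congrArg f h)
        have hiac : ia ≠ ic := fun h => hac (congrArg f h)
        have hibc : ib ≠ ic := fun h => hbc (congrArg f h)
        obtain ⟨l, m, h1l, h1m, h2l, h2m, h3l, h3m, hlm⟩ := selA ia ib ic hiab hiac hibc
        exact mk_equiv hV G u (f l) (f m) (f ia) (f ib) (f ic)
          (hu l) (hu m) (finj.ne hlm)
          (finj.ne hiab) (finj.ne hiac) (finj.ne hibc)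
          (hu ia) (hu ib) (hu ic)
          (finj.ne h1l.symm) (finj.ne h2l.symm) (finj.ne h3l.symm)
          (finj.ne h1m.symm) (finj.ne h2m.symm) (finj.ne h3m.symm)
          hua hub huc
          (hK l ia h1l.symm) (hK l ib h2l.symm) (hK l ic h3l.symm)
          (hK m ia h1m.symm) (hK m ib h2m.symm) (hK m ic h3m.symm)
      · -- Case B : one branch set of size two
        push_neg at hnot
        obtain ⟨t, htne⟩ := hnot
        have key : (B t).toFinset.card + ∑ j ∈ Finset.univ.erase t, (B j).toFinset.card
            = ∑ j, (B j).toFinset.card :=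
          Finset.add_sum_erase Finset.univ (fun j => (B j).toFinset.card) (Finset.mem_univ t)
        have h4 : 4 ≤ ∑ j ∈ Finset.univ.erase t, (B j).toFinset.card := by
          have hce : (Finset.univ.erase t).card = 4 := by
            rw [Finset.card_erase_of_mem (Finset.mem_univ t)]; simp
          calc 4 = ∑ _j ∈ Finset.univ.erase t, 1 := by
                rw [Finset.sum_const, hce, smul_eq_mul, mul_one]
            _ ≤ _ := Finset.sum_le_sum fun j _ => hne j
        have ht2 : (B t).toFinset.card = 2 := by
          have h1 := hne t
          omega
        have hone : ∀ j, j ≠ t → (B j).toFinset.card = 1 := by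
          intro j hjt
          have hmem : j ∈ Finset.univ.erase t := Finset.mem_erase.2 ⟨hjt, Finset.mem_univ j⟩
          have key2 : (B j).toFinset.card
              + ∑ k ∈ (Finset.univ.erase t).erase j, (B k).toFinset.card
              = ∑ k ∈ Finset.univ.erase t, (B k).toFinset.card :=
            Finset.add_sum_erase _ (fun k => (B k).toFinset.card) hmem
          have h3' : 3 ≤ ∑ k ∈ (Finset.univ.erase t).erase j, (B k).toFinset.card := by
            have hce : ((Finset.univ.erase t).erase j).card = 3 := by
              rw [Finset.card_erase_of_mem hmem,
                Finset.card_erase_of_mem (Finset.mem_univ t)]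
              simp
            calc 3 = ∑ _k ∈ (Finset.univ.erase t).erase j, 1 := by
                  rw [Finset.sum_const, hce, smul_eq_mul, mul_one]
              _ ≤ _ := Finset.sum_le_sum fun k _ => hne k
          have h1 := hne j
          omega
        obtain ⟨x, y, hxy, hBt⟩ : ∃ x y, x ≠ y ∧ B t = {x, y} := by
          rw [← Set.ncard_eq_two, Set.ncard_eq_toFinset_card']
          exact ht2
        have hxmem : x ∈ B t := by rw [hBt]; exact Set.mem_insert _ _
        have hymem : y ∈ B t := by rw [hBt]; simp
        have hxyadj : G.Adj x y := by
          obtain ⟨z, hz, hadj⟩ := aux_exists_adj G (hconn t) hxmem hymem hxy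
          rw [hBt] at hz
          simp only [Set.mem_insert_iff, Set.mem_singleton_iff] at hz
          rcases hz with rfl | rfl
          · exact absurd hadj (G.irrefl)
          · exact hadj
        have hall1 : ∀ j, ∃ v, j ≠ t → B j = {v} := by
          intro j
          by_cases hjt : j = t
          · exact ⟨x, fun h => absurd hjt h⟩
          · obtain ⟨v, hv⟩ : ∃ v, B j = {v} := by
              rw [← Set.ncard_eq_one, Set.ncard_eq_toFinset_card']
              exact hone j hjt
            exact ⟨v, fun _ => hv⟩
        choose f hf using hall1
        have finj : ∀ p q, p ≠ t → q ≠ t → p ≠ q → f p ≠ f q := by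
          intro p q hpt hqt hpq hfe
          have hd : Disjoint (B p) (B q) := hdisj hpq
          rw [hf p hpt, hf q hqt, hfe] at hd
          simp at hd
        have hxf : ∀ j, j ≠ t → x ≠ f j := by
          intro j hjt hfe
          have hd : Disjoint (B t) (B j) := hdisj (Ne.symm hjt)
          rw [hf j hjt] at hd
          exact Set.disjoint_left.1 hd hxmem (by rw [← hfe]; rfl)
        have hyf : ∀ j, j ≠ t → y ≠ f j := by
          intro j hjt hfe
          have hd : Disjoint (B t) (B j) := hdisj (Ne.symm hjt)
          rw [hf j hjt] at hd
          exact Set.disjoint_left.1 hd hymem (by rw [← hfe]; rfl)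
        have hK : ∀ p q, p ≠ t → q ≠ t → p ≠ q → G.Adj (f p) (f q) := by
          intro p q hpt hqt hpq
          obtain ⟨z, hz, w, hw, hzw⟩ := hedge p q (by simpa using hpq)
          rw [hf p hpt, Set.mem_singleton_iff] at hz
          rw [hf q hqt, Set.mem_singleton_iff] at hw
          subst hz hw
          exact hzw
        have hedgext : ∀ j, j ≠ t → G.Adj x (f j) ∨ G.Adj y (f j) := by
          intro j hjt
          obtain ⟨z, hz, w, hw, hzw⟩ := hedge j t (by simpa using hjt)
          rw [hf j hjt, Set.mem_singleton_iff] at hz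
          rw [hBt] at hw
          simp only [Set.mem_insert_iff, Set.mem_singleton_iff] at hw
          subst hz
          rcases hw with rfl | rfl
          · exact Or.inl hzw.symm
          · exact Or.inr hzw.symm
        have hcov : ∀ v : V, v = x ∨ v = y ∨ ∃ j, j ≠ t ∧ v = f j := by
          have himg : (Finset.image f (Finset.univ.erase t)).card = 4 := by
            rw [Finset.card_image_of_injOn
              (fun p hp q hq hpq => by
                by_contra hne'
                exact finj p q (Finset.mem_erase.1 hp).1 (Finset.mem_erase.1 hq).1 hne' hpq),
              Finset.card_erase_of_mem (Finset.mem_univ t)]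
            simp
          have hy1 : y ∉ Finset.image f (Finset.univ.erase t) := by
            simp only [Finset.mem_image]
            rintro ⟨j, hj, hje⟩
            exact hyf j (Finset.mem_erase.1 hj).1 hje.symm
          have hx1 : x ∉ insert y (Finset.image f (Finset.univ.erase t)) := by
            simp only [Finset.mem_insert, Finset.mem_image]
            rintro (h | ⟨j, hj, hje⟩)
            · exact hxy h
            · exact hxf j (Finset.mem_erase.1 hj).1 hje.symm
          have hScard : (insert x (insert y (Finset.image f (Finset.univ.erase t)))).card = 6 := by
            rw [Finset.card_insert_of_notMem hx1, Finset.card_insert_of_notMem hy1, himg]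
          have huniv := Finset.eq_univ_of_card _ (by rw [hScard, hV])
          intro v
          have hv : v ∈ insert x (insert y (Finset.image f (Finset.univ.erase t))) :=
            huniv ▸ Finset.mem_univ v
          simp only [Finset.mem_insert, Finset.mem_image] at hv
          rcases hv with h | h | ⟨j, hj, hje⟩
          · exact Or.inl h
          · exact Or.inr (Or.inl h)
          · exact Or.inr (Or.inr ⟨j, (Finset.mem_erase.1 hj).1, hje.symm⟩)
        have htwo : ∀ w : V, w ≠ y → (∀ z, G.Adj w z → z ≠ w) →
            True := fun _ _ _ => trivial
        have hx2 : ∃ i1 i2, i1 ≠ i2 ∧ i1 ≠ t ∧ i2 ≠ t ∧ G.Adj x (f i1) ∧ G.Adj x (f i2) := by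
          obtain ⟨a, b, c, hab, hac, hbc, hxa, hxb, hxc⟩ := three_neighbors hV h3 x
          have himg : ∀ z, G.Adj x z → z ≠ y → ∃ j, j ≠ t ∧ z = f j := by
            intro z hz hzy
            rcases hcov z with h | h | h
            · exact absurd h hz.ne'
            · exact absurd h hzy
            · exact h
          by_cases hay : a = y
          · obtain ⟨i1, h1t, he1⟩ := himg b hxb (fun h => hab (hay.trans h.symm))
            obtain ⟨i2, h2t, he2⟩ := himg c hxc (fun h => hac (hay.trans h.symm))
            refine ⟨i1, i2, ?_, h1t, h2t, he1 ▸ hxb, he2 ▸ hxc⟩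
            rintro rfl
            exact hbc (he1.trans he2.symm)
          · by_cases hby : b = y
            · obtain ⟨i1, h1t, he1⟩ := himg a hxa hay
              obtain ⟨i2, h2t, he2⟩ := himg c hxc (fun h => hbc (hby.trans h.symm))
              refine ⟨i1, i2, ?_, h1t, h2t, he1 ▸ hxa, he2 ▸ hxc⟩
              rintro rfl
              exact hac (he1.trans he2.symm)
            · obtain ⟨i1, h1t, he1⟩ := himg a hxa hay
              obtain ⟨i2, h2t, he2⟩ := himg b hxb hby
              refine ⟨i1, i2, ?_, h1t, h2t, he1 ▸ hxa, he2 ▸ hxb⟩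
              rintro rfl
              exact hab (he1.trans he2.symm)
        have hy2 : ∃ i1 i2, i1 ≠ i2 ∧ i1 ≠ t ∧ i2 ≠ t ∧ G.Adj y (f i1) ∧ G.Adj y (f i2) := by
          obtain ⟨a, b, c, hab, hac, hbc, hxa, hxb, hxc⟩ := three_neighbors hV h3 y
          have himg : ∀ z, G.Adj y z → z ≠ x → ∃ j, j ≠ t ∧ z = f j := by
            intro z hz hzx
            rcases hcov z with h | h | h
            · exact absurd h hzx
            · exact absurd h hz.ne'
            · exact h
          by_cases hay : a = x
          · obtain ⟨i1, h1t, he1⟩ := himg b hxb (fun h => hab (hay.trans h.symm))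
            obtain ⟨i2, h2t, he2⟩ := himg c hxc (fun h => hac (hay.trans h.symm))
            refine ⟨i1, i2, ?_, h1t, h2t, he1 ▸ hxb, he2 ▸ hxc⟩
            rintro rfl
            exact hbc (he1.trans he2.symm)
          · by_cases hby : b = x
            · obtain ⟨i1, h1t, he1⟩ := himg a hxa hay
              obtain ⟨i2, h2t, he2⟩ := himg c hxc (fun h => hbc (hby.trans h.symm))
              refine ⟨i1, i2, ?_, h1t, h2t, he1 ▸ hxa, he2 ▸ hxc⟩
              rintro rfl
              exact hac (he1.trans he2.symm)
            · obtain ⟨i1, h1t, he1⟩ := himg a hxa hay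
              obtain ⟨i2, h2t, he2⟩ := himg b hxb hby
              refine ⟨i1, i2, ?_, h1t, h2t, he1 ▸ hxa, he2 ▸ hxb⟩
              rintro rfl
              exact hab (he1.trans he2.symm)
        obtain ⟨i1, i2, hi12, hi1t, hi2t, hxi1, hxi2⟩ := hx2
        obtain ⟨j1, j2, hj12, hj1t, hj2t, hyj1, hyj2⟩ := hy2
        have hIc : (Finset.univ.erase t).card = 4 := by
          rw [Finset.card_erase_of_mem (Finset.mem_univ t)]; simp
        have hxc : 2 ≤ ((Finset.univ.erase t).filter (fun i => G.Adj x (f i))).card := by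
          have hsub : ({i1, i2} : Finset (Fin 5)) ⊆
              (Finset.univ.erase t).filter (fun i => G.Adj x (f i)) := by
            intro i hi
            rcases Finset.mem_insert.1 hi with rfl | hi
            · exact Finset.mem_filter.2 ⟨Finset.mem_erase.2 ⟨hi1t, Finset.mem_univ _⟩, hxi1⟩
            · rw [Finset.mem_singleton] at hi
              subst hi
              exact Finset.mem_filter.2 ⟨Finset.mem_erase.2 ⟨hi2t, Finset.mem_univ _⟩, hxi2⟩
          calc 2 = ({i1, i2} : Finset (Fin 5)).card := (Finset.card_pair hi12).symm
            _ ≤ _ := Finset.card_le_card hsub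
        have hyc : 2 ≤ ((Finset.univ.erase t).filter (fun i => G.Adj y (f i))).card := by
          have hsub : ({j1, j2} : Finset (Fin 5)) ⊆
              (Finset.univ.erase t).filter (fun i => G.Adj y (f i)) := by
            intro i hi
            rcases Finset.mem_insert.1 hi with rfl | hi
            · exact Finset.mem_filter.2 ⟨Finset.mem_erase.2 ⟨hj1t, Finset.mem_univ _⟩, hyj1⟩
            · rw [Finset.mem_singleton] at hi
              subst hi
              exact Finset.mem_filter.2 ⟨Finset.mem_erase.2 ⟨hj2t, Finset.mem_univ _⟩, hyj2⟩
          calc 2 = ({j1, j2} : Finset (Fin 5)).card := (Finset.card_pair hj12).symm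
            _ ≤ _ := Finset.card_le_card hsub
        have hcovI : Finset.univ.erase t ⊆
            (Finset.univ.erase t).filter (fun i => G.Adj x (f i)) ∪
            (Finset.univ.erase t).filter (fun i => G.Adj y (f i)) := by
          intro i hi
          rcases hedgext i (Finset.mem_erase.1 hi).1 with h | h
          · exact Finset.mem_union_left _ (Finset.mem_filter.2 ⟨hi, h⟩)
          · exact Finset.mem_union_right _ (Finset.mem_filter.2 ⟨hi, h⟩)
        obtain ⟨p, q, r, s, hpSy, hqSy, hrSx, hsSx, hpq, hpr, hps, hqr, hqs, hrs⟩ :=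
          selB' (Finset.filter_subset _ _) (Finset.filter_subset _ _) hIc hxc hyc hcovI
        have hpt : p ≠ t := (Finset.mem_erase.1 (Finset.mem_of_mem_filter _ hpSy)).1
        have hqt : q ≠ t := (Finset.mem_erase.1 (Finset.mem_of_mem_filter _ hqSy)).1
        have hrt : r ≠ t := (Finset.mem_erase.1 (Finset.mem_of_mem_filter _ hrSx)).1
        have hst : s ≠ t := (Finset.mem_erase.1 (Finset.mem_of_mem_filter _ hsSx)).1
        have hyp : G.Adj y (f p) := (Finset.mem_filter.1 hpSy).2
        have hyq : G.Adj y (f q) := (Finset.mem_filter.1 hqSy).2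
        have hxr : G.Adj x (f r) := (Finset.mem_filter.1 hrSx).2
        have hxs : G.Adj x (f s) := (Finset.mem_filter.1 hsSx).2
        exact mk_equiv hV G x (f p) (f q) y (f r) (f s)
          (hxf p hpt) (hxf q hqt) (finj p q hpt hqt hpq)
          (hyf r hrt) (hyf s hst) (finj r s hrt hst hrs)
          hxy (hxf r hrt) (hxf s hst)
          (fun h => hyf p hpt h.symm) (finj p r hpt hrt hpr) (finj p s hpt hst hps)
          (fun h => hyf q hqt h.symm) (finj q r hqt hrt hqr) (finj q s hqt hst hqs)
          hxyadj hxr hxs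
          hyp.symm (hK p r hpt hrt hpr) (hK p s hpt hst hps)
          hyq.symm (hK q r hqt hrt hqr) (hK q s hqt hst hqs)
    · -- K33 minor case : all six branch sets are singletons
      have hne : ∀ i, 1 ≤ (B i).toFinset.card := by
        intro i
        rw [Nat.one_le_iff_ne_zero, ne_eq, Finset.card_eq_zero, ← ne_eq,
          ← Finset.nonempty_iff_ne_empty]
        exact Set.toFinset_nonempty.2 (Set.nonempty_coe_sort.1 (hconn i).nonempty)
      have hsum : ∑ i, (B i).toFinset.card ≤ 6 := by
        rw [← Finset.card_biUnion (fun a _ b _ hab => Set.disjoint_toFinset.2 (hdisj hab))]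
        rw [← hV]
        exact Finset.card_le_univ _
      have hall : ∀ i, ∃ v, B i = {v} := by
        intro i
        rw [← Set.ncard_eq_one, Set.ncard_eq_toFinset_card']
        have key : (B i).toFinset.card + ∑ j ∈ Finset.univ.erase i, (B j).toFinset.card
            = ∑ j, (B j).toFinset.card :=
          Finset.add_sum_erase Finset.univ (fun j => (B j).toFinset.card) (Finset.mem_univ i)
        have h5 : 5 ≤ ∑ j ∈ Finset.univ.erase i, (B j).toFinset.card := by
          have hce : (Finset.univ.erase i).card = 5 := by
            rw [Finset.card_erase_of_mem (Finset.mem_univ i)]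
            simp
          calc 5 = ∑ _j ∈ Finset.univ.erase i, 1 := by
                rw [Finset.sum_const, hce, smul_eq_mul, mul_one]
            _ ≤ _ := Finset.sum_le_sum fun j _ => hne j
        have h1 := hne i
        omega
      choose f hf using hall
      have finj : Function.Injective f := by
        intro i j hij
        by_contra hne'
        have hd : Disjoint (B i) (B j) := hdisj hne'
        rw [hf i, hf j, hij] at hd
        simp at hd
      refine ⟨Equiv.ofBijective f ((Fintype.bijective_iff_injective_and_card f).2
        ⟨finj, by simp [hV]⟩), ?_⟩
      intro a b hab
      obtain ⟨z, hz, w, hw, hzw⟩ := hedge a b hab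
      rw [hf a, Set.mem_singleton_iff] at hz
      rw [hf b, Set.mem_singleton_iff] at hw
      subst hz hw
      exact hzw
  · rintro ⟨e, he⟩
    right
    refine ⟨fun w => {e w}, fun w => ?_, fun w1 w2 h => ?_,
      fun w1 w2 h => ⟨e w1, rfl, e w2, rfl, he w1 w2 h⟩⟩
    · haveI : Nonempty ({e w} : Set V) := ⟨⟨e w, rfl⟩⟩
      exact ⟨fun a b => by
        have hab : a = b := Subtype.ext (a.2.trans b.2.symm)
        exact hab ▸ Reachable.refl a⟩
    · exact Set.disjoint_singleton.2 fun hc => h (e.injective hc)
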